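/- Let P be a polynomial on ℝⁿ solving the minimal surface equation (1 + |∇P|²)ΔP − ∑_{i,j} P_{x_i} P_{x_j} P_{x_i x_j} = 0, with deg P = m ≥ 2, and write P = P_m + ⋯ + P_1 as a sum of homogeneous components. Then the top-degree component satisfies L P_m := |∇P_m|² ΔP_m − ∑_{i,j} P_{m,x_i} P_{m,x_j} P_{m,x_i x_j} = 0. -/

import Mathlib

open MvPolynomial Finsupp

lemma deg_sub_single {σ : Type*} (v : σ →₀ ℕ) (i : σ) (h : v i ≠ 0) :
    (v - Finsupp.single i 1).degree + 1 = v.degree := by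
  classical
  have hle : Finsupp.single i 1 ≤ v := by
    rw [Finsupp.single_le_iff]; omega
  have h1 : (v - Finsupp.single i 1) + Finsupp.single i 1 = v :=
    tsub_add_cancel_of_le hle
  have h2 : ((v - Finsupp.single i 1) + Finsupp.single i 1).degree
      = (v - Finsupp.single i 1).degree + (Finsupp.single i 1).degree := by
    simp [Finsupp.degree_eq_weight_one, map_add]
  have h3 : (Finsupp.single i 1 : σ →₀ ℕ).degree = 1 := by
    simp [Finsupp.degree_apply, Finsupp.support_single_ne_zero _ one_ne_zero]
  rw [h1] at h2
  omega

lemma pderiv_isHomogeneous {σ : Type*} {R : Type*} [CommSemiring R] (i : σ)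
    {p : MvPolynomial σ R} {d : ℕ} (h : p.IsHomogeneous d) :
    (pderiv i p).IsHomogeneous (d - 1) := by
  classical
  rw [p.as_sum, map_sum]
  apply IsHomogeneous.sum
  intro v hv
  rw [pderiv_monomial]
  by_cases hvi : v i = 0
  · simp only [hvi, Nat.cast_zero, mul_zero, monomial_zero]
    exact isHomogeneous_zero _ _ _
  · apply isHomogeneous_monomial
    have hvd : v.degree = d := by
      have := h (MvPolynomial.mem_support_iff.mp hv)
      rw [Finsupp.degree_eq_weight_one]; exact this
    have := deg_sub_single v i hvi
    omega

lemma tdeg_pderiv_le {σ : Type*} {R : Type*} [CommSemiring R] (i : σ)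
    (p : MvPolynomial σ R) : (pderiv i p).totalDegree ≤ p.totalDegree - 1 := by
  classical
  conv_lhs => rw [p.as_sum, map_sum]
  refine le_trans (totalDegree_finset_sum _ _) (Finset.sup_le fun v hv => ?_)
  rw [pderiv_monomial]
  by_cases hvi : v i = 0
  · simp [hvi]
  · refine le_trans (totalDegree_monomial_le _ _) ?_
    have h1 := deg_sub_single v i hvi
    have h2 : v.degree ≤ p.totalDegree := by
      have := MvPolynomial.le_totalDegree hv
      simpa [Finsupp.degree_apply, Finsupp.sum] using this
    have h3 : ((v - Finsupp.single i 1).sum fun _ => id) = (v - Finsupp.single i 1).degree :=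
      rfl
    rw [h3]
    omega

lemma pderiv_eq_zero_of_tdeg {σ : Type*} {R : Type*} [CommSemiring R] (i : σ)
    {p : MvPolynomial σ R} (h : p.totalDegree = 0) : pderiv i p = 0 := by
  classical
  rw [p.as_sum, map_sum]
  apply Finset.sum_eq_zero
  intro v hv
  rw [pderiv_monomial]
  have hvz := (totalDegree_eq_zero_iff σ p).mp h v hv i
  simp [hvz]

lemma MvPolynomial.IsHomogeneous.cast' {σ : Type*} {R : Type*} [CommSemiring R] {p : MvPolynomial σ R}
    {a b : ℕ} (h : p.IsHomogeneous a) (hab : a = b) : p.IsHomogeneous b := hab ▸ h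

/-- If a polynomial `P` on `ℝⁿ` of degree `m ≥ 2` solves the minimal surface equation
`(1 + |∇P|²)ΔP − ∑ᵢⱼ P_{xᵢ} P_{xⱼ} P_{xᵢxⱼ} = 0`, then its top-degree homogeneous
component `P_m` satisfies `L P_m := |∇P_m|² ΔP_m − ∑ᵢⱼ P_{m,xᵢ} P_{m,xⱼ} P_{m,xᵢxⱼ} = 0`. -/
theorem stmt3 {n : ℕ} (m : ℕ) (hm : 2 ≤ m) (P : MvPolynomial (Fin n) ℝ)
    (hdeg : P.totalDegree = m)
    (hMSE : (1 + ∑ i : Fin n, (pderiv i P) ^ 2) * (∑ i : Fin n, pderiv i (pderiv i P))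
      - ∑ i : Fin n, ∑ j : Fin n,
          pderiv i P * pderiv j P * pderiv j (pderiv i P) = 0) :
    (∑ i : Fin n, (pderiv i (homogeneousComponent m P)) ^ 2)
        * (∑ i : Fin n, pderiv i (pderiv i (homogeneousComponent m P)))
      - ∑ i : Fin n, ∑ j : Fin n,
          pderiv i (homogeneousComponent m P) * pderiv j (homogeneousComponent m P)
            * pderiv j (pderiv i (homogeneousComponent m P)) = 0 := by
  classical
  set Q := homogeneousComponent m P with hQdef
  set R := P - Q with hRdef
  have hQhom : Q.IsHomogeneous m := homogeneousComponent_isHomogeneous m P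
  have hRdeg : R.totalDegree ≤ m - 1 := by
    rw [MvPolynomial.totalDegree]
    refine Finset.sup_le fun d hd => ?_
    rw [MvPolynomial.mem_support_iff] at hd
    have hc : MvPolynomial.coeff d R = if d.degree = m then 0 else MvPolynomial.coeff d P := by
      rw [hRdef, MvPolynomial.coeff_sub, hQdef, coeff_homogeneousComponent]
      split_ifs <;> ring
    by_cases hdm : d.degree = m
    · rw [hc, if_pos hdm] at hd; exact absurd rfl hd
    · rw [hc, if_neg hdm] at hd
      have h1 : d.degree ≤ m := by
        have := MvPolynomial.le_totalDegree (MvPolynomial.mem_support_iff.mpr hd)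
        rw [hdeg] at this
        exact this
      show d.degree ≤ m - 1
      omega
  -- derivative degree bounds
  have hPd : ∀ i : Fin n, (pderiv i P).totalDegree ≤ m - 1 := fun i => by
    have := tdeg_pderiv_le i P; omega
  have hPdd : ∀ i j : Fin n, (pderiv j (pderiv i P)).totalDegree ≤ m - 2 := fun i j => by
    have := tdeg_pderiv_le j (pderiv i P); have := hPd i; omega
  have hQd : ∀ i : Fin n, (pderiv i Q).totalDegree ≤ m - 1 := fun i =>
    (pderiv_isHomogeneous i hQhom).totalDegree_le
  have hQdd : ∀ i j : Fin n, (pderiv j (pderiv i Q)).totalDegree ≤ m - 2 := fun i j => by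
    have := tdeg_pderiv_le j (pderiv i Q); have := hQd i; omega
  have hRd : ∀ i : Fin n, (pderiv i R).totalDegree ≤ m - 2 := fun i => by
    have := tdeg_pderiv_le i R; omega
  have hRdd : ∀ i j : Fin n, (pderiv j (pderiv i R)).totalDegree ≤ m - 3 := fun i j => by
    have := tdeg_pderiv_le j (pderiv i R); have := hRd i; omega
  -- abbreviations
  set S1 := ∑ i : Fin n, (pderiv i P) ^ 2 with hS1
  set Δ := ∑ i : Fin n, pderiv i (pderiv i P) with hΔ
  set T := ∑ i : Fin n, ∑ j : Fin n, pderiv i P * pderiv j P * pderiv j (pderiv i P) with hT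
  set S1Q := ∑ i : Fin n, (pderiv i Q) ^ 2 with hS1Q
  set ΔQ := ∑ i : Fin n, pderiv i (pderiv i Q) with hΔQ
  set TQ := ∑ i : Fin n, ∑ j : Fin n, pderiv i Q * pderiv j Q * pderiv j (pderiv i Q) with hTQ
  have hpr : ∀ i : Fin n, pderiv i R = pderiv i P - pderiv i Q := fun i => by
    rw [hRdef, map_sub]
  have hprr : ∀ i j : Fin n,
      pderiv j (pderiv i R) = pderiv j (pderiv i P) - pderiv j (pderiv i Q) := fun i j => by
    rw [hpr i, map_sub]
  set A := ∑ i : Fin n, pderiv i R * (pderiv i P + pderiv i Q) with hA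
  set D := ∑ i : Fin n, pderiv i (pderiv i R) with hD
  set TT := ∑ i : Fin n, ∑ j : Fin n,
      (pderiv i R * pderiv j P * pderiv j (pderiv i P)
        + pderiv i Q * pderiv j R * pderiv j (pderiv i P)
        + pderiv i Q * pderiv j Q * pderiv j (pderiv i R)) with hTT
  have hSA : S1 = S1Q + A := by
    rw [hS1, hS1Q, hA, ← Finset.sum_add_distrib]
    refine Finset.sum_congr rfl fun i _ => ?_
    rw [hpr i]; ring
  have hDD : Δ = ΔQ + D := by
    rw [hΔ, hΔQ, hD, ← Finset.sum_add_distrib]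
    refine Finset.sum_congr rfl fun i _ => ?_
    rw [hprr i i]; ring
  have hTTT : T = TQ + TT := by
    rw [hT, hTQ, hTT, ← Finset.sum_add_distrib]
    refine Finset.sum_congr rfl fun i _ => ?_
    rw [← Finset.sum_add_distrib]
    refine Finset.sum_congr rfl fun j _ => ?_
    rw [hprr i j, hpr i, hpr j]; ring
  set E := Δ + (A * Δ + S1Q * D) - TT with hE
  have hkey : S1Q * ΔQ - TQ = ((1 + S1) * Δ - T) - E := by
    rw [hE, hSA, hDD, hTTT]; ring
  rw [hMSE, zero_sub] at hkey
  -- degree bounds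
  have hN : 0 < 3 * m - 4 := by omega
  have hΔdeg : Δ.totalDegree ≤ m - 2 :=
    le_trans (totalDegree_finset_sum _ _) (Finset.sup_le fun i _ => hPdd i i)
  have hAdeg : A.totalDegree ≤ 2 * m - 3 := by
    refine le_trans (totalDegree_finset_sum _ _) (Finset.sup_le fun i _ => ?_)
    have h1 := MvPolynomial.totalDegree_mul (pderiv i R) (pderiv i P + pderiv i Q)
    have h2 := MvPolynomial.totalDegree_add (pderiv i P) (pderiv i Q)
    have := hRd i; have := hPd i; have := hQd i
    omega
  have hS1Qdeg : S1Q.totalDegree ≤ 2 * m - 2 := by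
    refine le_trans (totalDegree_finset_sum _ _) (Finset.sup_le fun i _ => ?_)
    rw [pow_two]
    have h1 := MvPolynomial.totalDegree_mul (pderiv i Q) (pderiv i Q)
    have := hQd i; omega
  have hDdeg : D.totalDegree ≤ m - 3 :=
    le_trans (totalDegree_finset_sum _ _) (Finset.sup_le fun i _ => hRdd i i)
  have hSDdeg : (S1Q * D).totalDegree < 3 * m - 4 := by
    rcases Nat.lt_or_ge m 3 with h3 | h3
    · have hDzero : D = 0 := by
        rw [hD]
        refine Finset.sum_eq_zero fun i _ => ?_
        exact pderiv_eq_zero_of_tdeg i (by have := hRd i; omega)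
      rw [hDzero, mul_zero, MvPolynomial.totalDegree_zero]; omega
    · have := MvPolynomial.totalDegree_mul S1Q D; omega
  have hADdeg : (A * Δ).totalDegree < 3 * m - 4 := by
    have := MvPolynomial.totalDegree_mul A Δ; omega
  have hterm3 : ∀ i j : Fin n,
      (pderiv i Q * pderiv j Q * pderiv j (pderiv i R)).totalDegree < 3 * m - 4 := by
    intro i j
    rcases Nat.lt_or_ge m 3 with h3 | h3
    · have hz : pderiv j (pderiv i R) = 0 :=
        pderiv_eq_zero_of_tdeg j (by have := hRd i; omega)
      rw [hz, mul_zero, MvPolynomial.totalDegree_zero]; omega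
    · have h1 := MvPolynomial.totalDegree_mul (pderiv i Q * pderiv j Q) (pderiv j (pderiv i R))
      have h2 := MvPolynomial.totalDegree_mul (pderiv i Q) (pderiv j Q)
      have := hQd i; have := hQd j; have := hRdd i j; omega
  have hTTdeg : TT.totalDegree < 3 * m - 4 := by
    refine lt_of_le_of_lt (totalDegree_finset_sum _ _) ((Finset.sup_lt_iff hN).mpr fun i _ => ?_)
    refine lt_of_le_of_lt (totalDegree_finset_sum _ _) ((Finset.sup_lt_iff hN).mpr fun j _ => ?_)
    refine lt_of_le_of_lt (MvPolynomial.totalDegree_add _ _) (max_lt ?_ (hterm3 i j))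
    refine lt_of_le_of_lt (MvPolynomial.totalDegree_add _ _) (max_lt ?_ ?_)
    · have h1 := MvPolynomial.totalDegree_mul (pderiv i R * pderiv j P) (pderiv j (pderiv i P))
      have h2 := MvPolynomial.totalDegree_mul (pderiv i R) (pderiv j P)
      have := hRd i; have := hPd j; have := hPdd i j; omega
    · have h1 := MvPolynomial.totalDegree_mul (pderiv i Q * pderiv j R) (pderiv j (pderiv i P))
      have h2 := MvPolynomial.totalDegree_mul (pderiv i Q) (pderiv j R)
      have := hQd i; have := hRd j; have := hPdd i j; omega
  have hEdeg : E.totalDegree < 3 * m - 4 := by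
    rw [hE]
    refine lt_of_le_of_lt (MvPolynomial.totalDegree_sub _ _) (max_lt ?_ hTTdeg)
    refine lt_of_le_of_lt (MvPolynomial.totalDegree_add _ _) (max_lt (by omega) ?_)
    exact lt_of_le_of_lt (MvPolynomial.totalDegree_add _ _) (max_lt hADdeg hSDdeg)
  -- homogeneity of L Q
  have hQdh : ∀ i : Fin n, (pderiv i Q).IsHomogeneous (m - 1) := fun i =>
    pderiv_isHomogeneous i hQhom
  have hQddh : ∀ i j : Fin n, (pderiv j (pderiv i Q)).IsHomogeneous (m - 2) := fun i j =>
    (pderiv_isHomogeneous j (hQdh i)).cast' (by omega)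
  have hLQhom : (S1Q * ΔQ - TQ).IsHomogeneous (3 * m - 4) := by
    apply MvPolynomial.IsHomogeneous.sub
    · have h1 : S1Q.IsHomogeneous (2 * m - 2) := by
        rw [hS1Q]
        exact MvPolynomial.IsHomogeneous.sum _ _ _ fun i _ =>
          ((hQdh i).pow 2).cast' (by omega)
      have h2 : ΔQ.IsHomogeneous (m - 2) := by
        rw [hΔQ]
        exact MvPolynomial.IsHomogeneous.sum _ _ _ fun i _ => hQddh i i
      exact (h1.mul h2).cast' (by omega)
    · rw [hTQ]
      refine MvPolynomial.IsHomogeneous.sum _ _ _ fun i _ =>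
        MvPolynomial.IsHomogeneous.sum _ _ _ fun j _ =>
          (((hQdh i).mul (hQdh j)).mul (hQddh i j)).cast' (by omega)
  by_contra hne
  have h1 : (S1Q * ΔQ - TQ).totalDegree = 3 * m - 4 := hLQhom.totalDegree hne
  have h2 : (S1Q * ΔQ - TQ).totalDegree < 3 * m - 4 := by
    rw [hkey, MvPolynomial.totalDegree_neg]
    exact hEdeg
  omega
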